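/- arXiv:1710.10450 — 3 statements merged into one kernel-verified Lean document; each statement's English description precedes it below -/
import Mathlib

section
/- Let S be an N×N complex matrix. If every N×N complex matrix H that commutes with S can be written as a polynomial in S, then the characteristic polynomial of S equals its minimal polynomial. -/
set_option maxHeartbeats 1000000

open Polynomial Module DirectSum

theorem stmt0 (N : ℕ) (S : Matrix (Fin N) (Fin N) ℂ)
    (h : ∀ H : Matrix (Fin N) (Fin N) ℂ, H * S = S * H →
      ∃ p : Polynomial ℂ, H = Polynomial.aeval S p) :
    Matrix.charpoly S = minpoly ℂ S := by
  classical
  set V := Fin N → ℂ with hV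
  set E : Matrix (Fin N) (Fin N) ℂ ≃ₐ[ℂ] (V →ₗ[ℂ] V) := Matrix.toLinAlgEquiv' with hE
  set f : Module.End ℂ V := E S with hf
  -- every C[X]-linear endomorphism of AEval' f is scalar multiplication
  have key : ∀ g : Module.AEval' f →ₗ[ℂ[X]] Module.AEval' f,
      ∃ q : ℂ[X], ∀ x, g x = q • x := by
    intro g
    set of := Module.AEval.of ℂ V f with hof
    set gm : V →ₗ[ℂ] V :=
      (of.symm.toLinearMap.comp (g.restrictScalars ℂ)).comp of.toLinearMap with hgm
    have hgm_apply : ∀ v : V, gm v = of.symm (g (of v)) := fun v => rfl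
    have hcomm : E.symm gm * S = S * E.symm gm := by
      apply E.injective
      rw [map_mul, map_mul, AlgEquiv.apply_symm_apply, ← hf]
      refine LinearMap.ext fun v => ?_
      rw [Module.End.mul_apply, Module.End.mul_apply]
      rw [hgm_apply, hgm_apply]
      have h1 : of (f v) = (X : ℂ[X]) • of v := (Module.AEval.X_smul_of f v).symm
      rw [h1, map_smul]
      exact congrArg f rfl ▸ (Module.AEval.of_symm_X_smul f (g (of v)))
    obtain ⟨q, hq⟩ := h _ hcomm
    refine ⟨q, fun x => ?_⟩
    have hgm2 : gm = Polynomial.aeval f q := by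
      have h2 : E (E.symm gm) = E (Polynomial.aeval S q) := by rw [← hq]
      rw [AlgEquiv.apply_symm_apply] at h2
      exact h2.trans (Polynomial.aeval_algHom_apply E S q).symm
    have h3 : g x = of (gm (of.symm x)) := by
      rw [hgm_apply, LinearEquiv.apply_symm_apply, LinearEquiv.apply_symm_apply]
    rw [h3, hgm2]
    have h4 := Module.AEval.of_aeval_smul f q (of.symm x)
    rw [LinearEquiv.apply_symm_apply] at h4
    exact h4
  -- structure theorem
  have htor : Module.IsTorsion ℂ[X] (Module.AEval' f) :=
    Module.AEval.isTorsion_of_finiteDimensional ℂ V f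
  obtain ⟨ι, hι, p, hp, e, ⟨eqv⟩⟩ := Module.equiv_directSum_of_isTorsion htor
  -- each p i ^ e i divides the minimal polynomial
  have hm0 : minpoly ℂ S ≠ 0 := minpoly.ne_zero_of_finite ℂ S
  have haevalf : Polynomial.aeval f (minpoly ℂ S) = 0 := by
    have h1 : Polynomial.aeval (E S) (minpoly ℂ S) = E (Polynomial.aeval S (minpoly ℂ S)) :=
      Polynomial.aeval_algHom_apply E S _
    rw [hf, h1, minpoly.aeval, map_zero]
  have hsmul0 : ∀ x : Module.AEval' f, (minpoly ℂ S) • x = 0 := by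
    intro x
    apply (Module.AEval.of ℂ V f).symm.injective
    rw [Module.AEval.of_symm_smul, haevalf, map_zero]
    exact zero_smul _ _
  have hdvd : ∀ i, p i ^ e i ∣ minpoly ℂ S := by
    intro i
    have h0 := hsmul0 (eqv.symm (DirectSum.lof ℂ[X] ι _ i
      (Submodule.Quotient.mk (1 : ℂ[X]))))
    have h1 : (minpoly ℂ S) • (DirectSum.lof ℂ[X] ι
        (fun j => ℂ[X] ⧸ (ℂ[X] ∙ p j ^ e j)) i (Submodule.Quotient.mk (1 : ℂ[X]))) = 0 := by
      have h2 := congrArg eqv h0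
      rw [map_smul, LinearEquiv.apply_symm_apply, map_zero] at h2
      exact h2
    rw [← map_smul] at h1
    have h2 := congrArg (DirectSum.component ℂ[X] ι _ i) h1
    rw [DirectSum.component.lof_self, map_zero] at h2
    rw [← Submodule.Quotient.mk_smul, smul_eq_mul, mul_one] at h2
    rw [Submodule.Quotient.mk_eq_zero] at h2
    obtain ⟨c, hc⟩ := Submodule.mem_span_singleton.mp h2
    exact ⟨c, by rw [← hc]; rw [smul_eq_mul]; ring⟩
  -- the prime powers are pairwise coprime
  have hcop : Pairwise (Function.onFun IsCoprime fun i => p i ^ e i) := by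
    intro i j hij
    rcases Nat.eq_zero_or_pos (e i) with h0 | hei
    · simp only [Function.onFun, h0, pow_zero]
      exact isCoprime_one_left
    rcases Nat.eq_zero_or_pos (e j) with h0 | hej
    · simp only [Function.onFun, h0, pow_zero]
      exact isCoprime_one_right
    by_contra hnc
    have hassoc : Associated (p i) (p j) := by
      refine (hp i).associated_of_dvd (hp j) ?_
      by_contra hnd
      exact hnc ((((hp i).coprime_iff_not_dvd).mpr hnd).pow)
    set c : ℂ[X] := p i ^ (e i - min (e i) (e j)) with hcdef
    have hwd : (ℂ[X] ∙ p j ^ e j) ≤ Submodule.comap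
        (c • (LinearMap.id : ℂ[X] →ₗ[ℂ[X]] ℂ[X])) (ℂ[X] ∙ p i ^ e i) := by
      intro x hx
      obtain ⟨d, hd⟩ := Submodule.mem_span_singleton.mp hx
      simp only [Submodule.mem_comap, LinearMap.smul_apply, LinearMap.id_coe, id_eq]
      rw [Submodule.mem_span_singleton]
      have hdvd2 : p i ^ e i ∣ c • x := by
        rw [← hd]
        have h3 : p i ^ e i ∣ c * p i ^ e j := by
          rw [hcdef, ← pow_add]
          exact pow_dvd_pow _ (by omega)
        have h4 : Associated (c * p i ^ e j) (c * p j ^ e j) :=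
          (Associated.pow_pow hassoc).mul_left c
        have h5 : p i ^ e i ∣ c * p j ^ e j := h3.trans h4.dvd
        rw [smul_eq_mul, smul_eq_mul]
        exact h5.trans ⟨d, by ring⟩
      obtain ⟨u, hu⟩ := hdvd2
      exact ⟨u, by rw [smul_eq_mul, hu]; ring⟩
    set φ₀ : (ℂ[X] ⧸ (ℂ[X] ∙ p j ^ e j)) →ₗ[ℂ[X]] (ℂ[X] ⧸ (ℂ[X] ∙ p i ^ e i)) :=
      Submodule.mapQ _ _ (c • LinearMap.id) hwd with hφ₀
    set H' : (⨁ k, ℂ[X] ⧸ (ℂ[X] ∙ p k ^ e k)) →ₗ[ℂ[X]] (⨁ k, ℂ[X] ⧸ (ℂ[X] ∙ p k ^ e k)) :=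
      (DirectSum.lof ℂ[X] ι (fun k => ℂ[X] ⧸ (ℂ[X] ∙ p k ^ e k)) i).comp
        (φ₀.comp (DirectSum.component ℂ[X] ι (fun k => ℂ[X] ⧸ (ℂ[X] ∙ p k ^ e k)) j)) with hH'def
    set g : Module.AEval' f →ₗ[ℂ[X]] Module.AEval' f :=
      (eqv.symm.toLinearMap.comp H').comp eqv.toLinearMap with hgdef
    obtain ⟨q, hq⟩ := key g
    have hH' : ∀ y, H' y = q • y := by
      intro y
      have h1 := hq (eqv.symm y)
      have h2 : g (eqv.symm y) = eqv.symm (H' y) := by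
        rw [hgdef]
        simp only [LinearMap.comp_apply, LinearEquiv.coe_toLinearMap,
          LinearEquiv.apply_symm_apply]
      rw [h2] at h1
      apply eqv.symm.injective
      rw [h1, map_smul]
    have h1 := hH' (DirectSum.lof ℂ[X] ι (fun k => ℂ[X] ⧸ (ℂ[X] ∙ p k ^ e k)) j
      (Submodule.Quotient.mk (1 : ℂ[X])))
    rw [hH'def] at h1
    simp only [LinearMap.comp_apply, DirectSum.component.lof_self] at h1
    rw [hφ₀, Submodule.mapQ_apply] at h1
    rw [← map_smul] at h1
    have h2 := congrArg (DirectSum.component ℂ[X] ι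
      (fun k => ℂ[X] ⧸ (ℂ[X] ∙ p k ^ e k)) i) h1
    rw [DirectSum.component.lof_self, DirectSum.component.of,
      dif_neg (Ne.symm hij)] at h2
    have h3 : (c • LinearMap.id : ℂ[X] →ₗ[ℂ[X]] ℂ[X]) 1 = c := by
      simp
    rw [h3, Submodule.Quotient.mk_eq_zero] at h2
    obtain ⟨u, hu⟩ := Submodule.mem_span_singleton.mp h2
    have hdvdc : p i ^ e i ∣ c := ⟨u, by rw [← hu, smul_eq_mul]; ring⟩
    have hdp : 0 < (p i).natDegree :=
      natDegree_pos_iff_degree_pos.mpr (degree_pos_of_irreducible (hp i))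
    have hcne : c ≠ 0 := pow_ne_zero _ (hp i).ne_zero
    have := Polynomial.natDegree_le_of_dvd hdvdc hcne
    rw [hcdef, Polynomial.natDegree_pow, Polynomial.natDegree_pow] at this
    have hmin : 0 < min (e i) (e j) := lt_min hei hej
    nlinarith [this, hdp, hmin, Nat.sub_lt hei (lt_min hei hej)]
  -- degree count : N ≤ natDegree (minpoly)
  have hNdeg : N ≤ (minpoly ℂ S).natDegree := by
    have hprod : (∏ i, p i ^ e i) ∣ minpoly ℂ S :=
      Finset.prod_dvd_of_coprime (fun i _ j _ hij => hcop hij) (fun i _ => hdvd i)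
    have h1 : (∏ i, p i ^ e i).natDegree ≤ (minpoly ℂ S).natDegree :=
      Polynomial.natDegree_le_of_dvd hprod hm0
    have h2 : (∏ i, p i ^ e i).natDegree = ∑ i, (e i) * (p i).natDegree := by
      rw [Polynomial.natDegree_prod _ _ (fun i _ => pow_ne_zero _ (hp i).ne_zero)]
      exact Finset.sum_congr rfl fun i _ => Polynomial.natDegree_pow _ _
    haveI hfin : ∀ i, Module.Finite ℂ (ℂ[X] ⧸ (ℂ[X] ∙ p i ^ e i)) := fun i =>
      (AdjoinRoot.powerBasis (pow_ne_zero (e i) (hp i).ne_zero)).finite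
    have h3 : ∀ i, Module.finrank ℂ (ℂ[X] ⧸ (ℂ[X] ∙ p i ^ e i))
        = (e i) * (p i).natDegree := by
      intro i
      have h4 := (AdjoinRoot.powerBasis (pow_ne_zero (e i) (hp i).ne_zero)).finrank
      rw [AdjoinRoot.powerBasis_dim] at h4
      have h5 : Module.finrank ℂ (ℂ[X] ⧸ (ℂ[X] ∙ p i ^ e i)) = (p i ^ e i).natDegree := h4
      rw [h5, Polynomial.natDegree_pow]
    have e1 : Module.finrank ℂ (Module.AEval' f) = N := by
      rw [← (Module.AEval.of ℂ V f).finrank_eq]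
      exact Module.finrank_fin_fun ℂ
    have e2 : Module.finrank ℂ (Module.AEval' f) = ∑ i, (e i) * (p i).natDegree := by
      rw [(eqv.restrictScalars ℂ).finrank_eq, Module.finrank_directSum]
      exact Finset.sum_congr rfl fun i _ => h3 i
    omega
  -- conclude
  have hmc := Matrix.minpoly_dvd_charpoly S
  have hcmonic : (Matrix.charpoly S).Monic := Matrix.charpoly_monic S
  have hmmonic : (minpoly ℂ S).Monic := minpoly.monic (IsIntegral.of_finite ℂ S)
  obtain ⟨r, hr⟩ := hmc
  have hrne : r ≠ 0 := by
    rintro rfl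
    rw [mul_zero] at hr
    exact hcmonic.ne_zero hr
  have hcdeg : (Matrix.charpoly S).natDegree = N := by
    rw [Matrix.charpoly_natDegree_eq_dim, Fintype.card_fin]
  have hsum : (minpoly ℂ S).natDegree + r.natDegree = N := by
    rw [← Polynomial.natDegree_mul hm0 hrne, ← hr, hcdeg]
  have hr0 : r.natDegree = 0 := by omega
  have hrC : r = Polynomial.C (r.coeff 0) := Polynomial.eq_C_of_natDegree_eq_zero hr0
  have hlc : (minpoly ℂ S).leadingCoeff * r.leadingCoeff = 1 := by
    rw [← Polynomial.leadingCoeff_mul, ← hr]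
    exact hcmonic
  rw [hmmonic.leadingCoeff, one_mul, Polynomial.leadingCoeff, hr0] at hlc
  have hr1 : r = 1 := by rw [hrC, hlc, Polynomial.C_1]
  rw [hr, hr1, mul_one]
end

section
/- An N×N complex matrix S satisfies charpoly(S) = minpoly(S) if and only if every matrix commuting with S is a polynomial in S. -/
open Polynomial Matrix

namespace Stmt2Aux

variable {N : ℕ} {S : Matrix (Fin N) (Fin N) ℂ}

/-- `v` has order `a` under `S`: a polynomial kills `v` iff `a` divides it. -/
def OrdS (S : Matrix (Fin N) (Fin N) ℂ) (v : Fin N → ℂ) (a : ℂ[X]) : Prop :=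
  ∀ q : ℂ[X], (aeval S q).mulVec v = 0 ↔ a ∣ q

lemma mulVec_aeval_mul (S : Matrix (Fin N) (Fin N) ℂ) (p q : ℂ[X]) (x : Fin N → ℂ) :
    (aeval S (p * q)).mulVec x = (aeval S p).mulVec ((aeval S q).mulVec x) := by
  rw [_root_.map_mul, ← Matrix.mulVec_mulVec]

lemma sum_mulVec' {ι : Type*} (s : Finset ι) (M : ι → Matrix (Fin N) (Fin N) ℂ)
    (v : Fin N → ℂ) : (∑ i ∈ s, M i).mulVec v = ∑ i ∈ s, (M i).mulVec v := by
  ext x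
  simp only [Matrix.mulVec, dotProduct, Finset.sum_apply, Matrix.sum_apply,
    Finset.sum_mul]
  rw [Finset.sum_comm]

lemma ordS_add {v w : Fin N → ℂ} {a b : ℂ[X]} (hv : OrdS S v a) (hw : OrdS S w b)
    (hab : IsCoprime a b) : OrdS S (v + w) (a * b) := by
  intro q
  constructor
  · intro h
    have hbv : (aeval S (q * b)).mulVec v = 0 := by
      have h0 : (aeval S (q * b)).mulVec (v + w) = 0 := by
        rw [mul_comm, mulVec_aeval_mul, h, Matrix.mulVec_zero]
      have hbw : (aeval S (q * b)).mulVec w = 0 := by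
        rw [mulVec_aeval_mul, (hw b).2 dvd_rfl, Matrix.mulVec_zero]
      rw [Matrix.mulVec_add, hbw, add_zero] at h0
      exact h0
    have hav : (aeval S (q * a)).mulVec w = 0 := by
      have h0 : (aeval S (q * a)).mulVec (v + w) = 0 := by
        rw [mul_comm, mulVec_aeval_mul, h, Matrix.mulVec_zero]
      have hv' : (aeval S (q * a)).mulVec v = 0 := by
        rw [mulVec_aeval_mul, (hv a).2 dvd_rfl, Matrix.mulVec_zero]
      rw [Matrix.mulVec_add, hv', zero_add] at h0
      exact h0
    have ha : a ∣ q := hab.dvd_of_dvd_mul_left (by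
      have := (hv _).1 hbv; rwa [mul_comm] at this)
    have hb : b ∣ q := hab.symm.dvd_of_dvd_mul_left (by
      have := (hw _).1 hav; rwa [mul_comm] at this)
    exact hab.mul_dvd ha hb
  · rintro ⟨c, rfl⟩
    rw [Matrix.mulVec_add]
    have h1 : (aeval S (a * b * c)).mulVec v = 0 := by
      rw [show a * b * c = b * c * a by ring, mulVec_aeval_mul, (hv a).2 dvd_rfl,
        Matrix.mulVec_zero]
    have h2 : (aeval S (a * b * c)).mulVec w = 0 := by
      rw [show a * b * c = a * c * b by ring, mulVec_aeval_mul, (hw b).2 dvd_rfl,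
        Matrix.mulVec_zero]
    rw [h1, h2, add_zero]

lemma aeval_min_ne (S : Matrix (Fin N) (Fin N) ℂ) (hN : 0 < N) {q : ℂ[X]} (hq : q ≠ 0)
    (hdeg : q.degree < (minpoly ℂ S).degree) : aeval S q ≠ 0 := by
  have : Nonempty (Fin N) := ⟨⟨0, hN⟩⟩
  intro h0
  have hmon : (q * C q.leadingCoeff⁻¹).Monic := monic_mul_leadingCoeff_inv hq
  have h1 : (minpoly ℂ S).degree ≤ (q * C q.leadingCoeff⁻¹).degree :=
    minpoly.min ℂ S hmon (by rw [_root_.map_mul, h0, zero_mul])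
  rw [degree_mul_leadingCoeff_inv q hq] at h1
  exact absurd (lt_of_le_of_lt h1 hdeg) (lt_irrefl _)

lemma exists_mulVec_ne_zero {M : Matrix (Fin N) (Fin N) ℂ} (hM : M ≠ 0) :
    ∃ u : Fin N → ℂ, M.mulVec u ≠ 0 := by
  by_contra h
  push_neg at h
  apply hM
  ext i j
  have := congrFun (h (Pi.single j 1)) i
  simpa [Matrix.mulVec_single] using this

lemma ordS_prime_pow (hN : 0 < N) {lam : ℂ}
    (hroot : (minpoly ℂ S).IsRoot lam) :
    ∃ u, OrdS S u ((X - C lam) ^ ((minpoly ℂ S).rootMultiplicity lam)) := by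
  have : Nonempty (Fin N) := ⟨⟨0, hN⟩⟩
  have hint : IsIntegral ℂ S := Matrix.isIntegral S
  have hm0 : minpoly ℂ S ≠ 0 := minpoly.ne_zero hint
  set m := minpoly ℂ S with hm
  set e := m.rootMultiplicity lam with he
  have he1 : 1 ≤ e := (rootMultiplicity_pos hm0).2 hroot
  obtain ⟨m', hmfac, hndvd⟩ := m.exists_eq_pow_rootMultiplicity_mul_and_not_dvd hm0 lam
  have hm'0 : m' ≠ 0 := by rintro rfl; rw [mul_zero] at hmfac; exact hm0 hmfac
  set p : ℂ[X] := X - C lam with hp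
  have hp0 : p ≠ 0 := X_sub_C_ne_zero lam
  set q0 : ℂ[X] := p ^ (e - 1) * m' with hq0
  have hq0ne : q0 ≠ 0 := mul_ne_zero (pow_ne_zero _ hp0) hm'0
  have hdeg : q0.degree < m.degree := by
    apply degree_lt_degree
    rw [hq0, hmfac, natDegree_mul (pow_ne_zero _ hp0) hm'0,
      natDegree_mul (pow_ne_zero _ hp0) hm'0, natDegree_pow, natDegree_pow,
      natDegree_X_sub_C]
    omega
  obtain ⟨w, hw⟩ := exists_mulVec_ne_zero (aeval_min_ne S hN hq0ne hdeg)
  refine ⟨(aeval S m').mulVec w, ?_⟩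
  have hkill : (aeval S (p ^ e)).mulVec ((aeval S m').mulVec w) = 0 := by
    rw [← mulVec_aeval_mul, ← hmfac, hm, minpoly.aeval, Matrix.zero_mulVec]
  have hsurv : (aeval S (p ^ (e - 1))).mulVec ((aeval S m').mulVec w) ≠ 0 := by
    rw [← mulVec_aeval_mul, ← hq0]; exact hw
  intro q
  constructor
  · intro hq
    set A := EuclideanDomain.gcdA q (p ^ e) with hA
    set B := EuclideanDomain.gcdB q (p ^ e) with hB
    set g := EuclideanDomain.gcd q (p ^ e) with hg
    have hgdvd : g ∣ p ^ e := EuclideanDomain.gcd_dvd_right _ _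
    obtain ⟨k, hk, hkg⟩ := (dvd_prime_pow (prime_X_sub_C lam) e).1 hgdvd
    have hgkill : (aeval S g).mulVec ((aeval S m').mulVec w) = 0 := by
      rw [hg, EuclideanDomain.gcd_eq_gcd_ab q (p ^ e),
        show q * A + p ^ e * B = A * q + B * p ^ e by ring,
        map_add, Matrix.add_mulVec, mulVec_aeval_mul, hq, Matrix.mulVec_zero,
        mulVec_aeval_mul, hkill, Matrix.mulVec_zero, add_zero]
    have hpk : (aeval S (p ^ k)).mulVec ((aeval S m').mulVec w) = 0 := by
      obtain ⟨u, hu⟩ := hkg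
      rw [← hu, mul_comm, mulVec_aeval_mul, hgkill, Matrix.mulVec_zero]
    have hke : k = e := by
      by_contra hne
      apply hsurv
      have : p ^ (e - 1) = p ^ (e - 1 - k) * p ^ k := by
        rw [← pow_add]; congr 1; omega
      rw [this, mulVec_aeval_mul, hpk, Matrix.mulVec_zero]
    subst hke
    exact hkg.symm.dvd.trans (EuclideanDomain.gcd_dvd_left _ _)
  · rintro ⟨c, rfl⟩
    rw [mul_comm, mulVec_aeval_mul, hkill, Matrix.mulVec_zero]

lemma ordS_exists (S : Matrix (Fin N) (Fin N) ℂ) (hN : 0 < N) :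
    ∃ v, OrdS S v (minpoly ℂ S) := by
  classical
  have : Nonempty (Fin N) := ⟨⟨0, hN⟩⟩
  have hint : IsIntegral ℂ S := Matrix.isIntegral S
  have hm0 : minpoly ℂ S ≠ 0 := minpoly.ne_zero hint
  have hmonic : (minpoly ℂ S).Monic := minpoly.monic hint
  set m := minpoly ℂ S with hm
  have hsplit : m.roots.card = m.natDegree :=
    splits_iff_card_roots.1 (IsAlgClosed.splits m)
  have hprodm : ∏ a ∈ m.roots.toFinset, (X - C a) ^ (m.rootMultiplicity a) = m := by
    conv_rhs => rw [← prod_multiset_X_sub_C_of_monic_of_roots_card_eq hmonic hsplit]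
    rw [Finset.prod_multiset_map_count]
    refine Finset.prod_congr rfl fun a ha => ?_
    rw [count_roots]
  have key : ∀ t : Finset ℂ, (∀ a ∈ t, m.IsRoot a) →
      ∃ v, OrdS S v (∏ a ∈ t, (X - C a) ^ (m.rootMultiplicity a)) := by
    intro t
    induction t using Finset.induction_on with
    | empty =>
      intro _
      refine ⟨0, fun q => ?_⟩
      simp [OrdS]
    | @insert a t ha ih =>
      intro hroots
      obtain ⟨v, hv⟩ := ih (fun b hb => hroots b (Finset.mem_insert_of_mem hb))
      obtain ⟨u, hu⟩ := ordS_prime_pow hN (hroots a (Finset.mem_insert_self a t))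
      rw [Finset.prod_insert ha]
      refine ⟨u + v, ordS_add hu hv ?_⟩
      apply IsCoprime.pow_left
      apply IsCoprime.prod_right
      intro b hb
      apply IsCoprime.pow_right
      exact isCoprime_X_sub_C_of_isUnit_sub (by
        have : a ≠ b := fun h => ha (h ▸ hb)
        exact (sub_ne_zero_of_ne this).isUnit)
  obtain ⟨v, hv⟩ := key m.roots.toFinset
    (fun a ha => isRoot_of_mem_roots (Multiset.mem_toFinset.1 ha))
  rw [hprodm] at hv
  exact ⟨v, hv⟩

lemma aeval_sum_mulVec (S : Matrix (Fin N) (Fin N) ℂ) {k : ℕ} (c : Fin k → ℂ)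
    (v : Fin N → ℂ) :
    (aeval S (∑ i : Fin k, C (c i) * X ^ (i : ℕ))).mulVec v
      = ∑ i : Fin k, c i • (S ^ (i : ℕ)).mulVec v := by
  rw [map_sum]
  rw [sum_mulVec']
  refine Finset.sum_congr rfl fun i _ => ?_
  rw [_root_.map_mul, aeval_C, aeval_X_pow, Algebra.algebraMap_eq_smul_one,
    Matrix.smul_mul, one_mul, Matrix.smul_mulVec]

lemma coeff_sum_C_mul_X_pow {k : ℕ} (c : Fin k → ℂ) (j : Fin k) :
    (∑ i : Fin k, C (c i) * X ^ (i : ℕ)).coeff (j : ℕ) = c j := by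
  rw [finset_sum_coeff]
  rw [Finset.sum_eq_single j]
  · simp
  · intro b _ hbj
    rw [coeff_C_mul, coeff_X_pow, if_neg (by simpa [Fin.val_eq_val] using hbj.symm), mul_zero]
  · simp

lemma orbit_li {v : Fin N → ℂ} (hv : OrdS S v (minpoly ℂ S)) {k : ℕ}
    (hk : k ≤ (minpoly ℂ S).natDegree) :
    LinearIndependent ℂ (fun i : Fin k => (S ^ (i : ℕ)).mulVec v) := by
  rw [Fintype.linearIndependent_iff]
  intro c hc j
  have hc' : (aeval S (∑ i : Fin k, C (c i) * X ^ (i : ℕ))).mulVec v = 0 := by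
    rw [aeval_sum_mulVec]; exact hc
  have hdvd := (hv _).1 hc'
  have hq0 : (∑ i : Fin k, C (c i) * X ^ (i : ℕ)) = 0 := by
    by_contra hne
    have h1 := natDegree_le_natDegree (degree_le_of_dvd hdvd hne)
    have h2 : (∑ i : Fin k, C (c i) * X ^ (i : ℕ)).natDegree ≤ k - 1 := by
      apply natDegree_sum_le_of_forall_le
      intro i _
      refine le_trans (natDegree_C_mul_le _ _) ?_
      rw [natDegree_X_pow]
      omega
    have hk1 := j.isLt
    omega
  have := coeff_sum_C_mul_X_pow c j
  rw [hq0] at this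
  simpa using this.symm

/-- dot with fixed w on the left, as a linear map in the right argument. -/
noncomputable def dotR (w : Fin N → ℂ) : (Fin N → ℂ) →ₗ[ℂ] ℂ where
  toFun x := w ⬝ᵥ x
  map_add' x y := dotProduct_add w x y
  map_smul' c x := by simp [dotProduct_smul]

lemma dotProduct_sum' {ι : Type*} (s : Finset ι) (w : Fin N → ℂ) (f : ι → (Fin N → ℂ)) :
    w ⬝ᵥ (∑ i ∈ s, f i) = ∑ i ∈ s, w ⬝ᵥ f i := by
  simp only [dotProduct, Finset.sum_apply, Finset.mul_sum]
  rw [Finset.sum_comm]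

@[simp] lemma dotR_apply (w x : Fin N → ℂ) : dotR w x = w ⬝ᵥ x := rfl

lemma forward_dir (h : Matrix.charpoly S = minpoly ℂ S)
    (H : Matrix (Fin N) (Fin N) ℂ) (hH : H * S = S * H) :
    ∃ p : ℂ[X], H = aeval S p := by
  classical
  rcases Nat.eq_zero_or_pos N with hN | hN
  · exact ⟨0, by subst hN; apply Subsingleton.elim⟩
  have : Nonempty (Fin N) := ⟨⟨0, hN⟩⟩
  have : Nontrivial (Matrix (Fin N) (Fin N) ℂ) := by infer_instance
  have hdeg : (minpoly ℂ S).natDegree = N := by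
    rw [← h, Matrix.charpoly_natDegree_eq_dim, Fintype.card_fin]
  obtain ⟨v, hv⟩ := ordS_exists S hN
  have hli : LinearIndependent ℂ (fun i : Fin N => (S ^ (i : ℕ)).mulVec v) :=
    orbit_li hv (le_of_eq hdeg.symm)
  have hcard : Fintype.card (Fin N) = Module.finrank ℂ (Fin N → ℂ) := by
    simp
  let b := basisOfLinearIndependentOfCardEqFinrank hli hcard
  have hb : ∀ i, b i = (S ^ (i : ℕ)).mulVec v := fun i => by
    rw [coe_basisOfLinearIndependentOfCardEqFinrank]
  set c : Fin N → ℂ := fun i => b.repr (H.mulVec v) i with hcdef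
  set p : ℂ[X] := ∑ i : Fin N, C (c i) * X ^ (i : ℕ) with hpdef
  have hHv : H.mulVec v = (aeval S p).mulVec v := by
    rw [hpdef, aeval_sum_mulVec]
    have := b.sum_repr (H.mulVec v)
    rw [← this]
    refine Finset.sum_congr rfl fun i _ => ?_
    rw [hb i]
  refine ⟨p, ?_⟩
  have hcomm : ∀ i : ℕ, H * S ^ i = S ^ i * H := fun i =>
    ((Commute.symm hH).pow_left i).symm
  have hpS : ∀ i : ℕ, aeval S p * S ^ i = S ^ i * aeval S p := fun i => by
    have : (S : Matrix (Fin N) (Fin N) ℂ) ^ i = aeval S ((X : ℂ[X]) ^ i) := by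
      rw [map_pow, aeval_X]
    rw [this, ← _root_.map_mul, ← _root_.map_mul, mul_comm p ((X : ℂ[X]) ^ i)]
  apply Matrix.toLin'.injective
  apply b.ext
  intro i
  rw [hb i]
  show H.mulVec ((S ^ (i : ℕ)).mulVec v) = (aeval S p).mulVec ((S ^ (i : ℕ)).mulVec v)
  rw [Matrix.mulVec_mulVec, Matrix.mulVec_mulVec, hcomm, hpS, ← Matrix.mulVec_mulVec,
    ← Matrix.mulVec_mulVec, hHv]

lemma backward_dir (hcom : ∀ H : Matrix (Fin N) (Fin N) ℂ, H * S = S * H →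
      ∃ p : ℂ[X], H = aeval S p) :
    Matrix.charpoly S = minpoly ℂ S := by
  classical
  rcases Nat.eq_zero_or_pos N with hN | hN
  · -- N = 0
    subst hN
    have h1 : Matrix.charpoly S = 1 := by
      rw [Matrix.charpoly, Matrix.det_isEmpty]
    have hint : IsIntegral ℂ S := Matrix.isIntegral S
    have h2 : minpoly ℂ S = 1 := by
      have hle : (minpoly ℂ S).degree ≤ (1 : ℂ[X]).degree :=
        minpoly.min ℂ S monic_one (Subsingleton.elim _ _)
      rw [degree_one] at hle
      have hmon := minpoly.monic hint
      exact Polynomial.eq_one_of_monic_natDegree_zero hmon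
        (Nat.le_zero.1 (natDegree_le_of_degree_le hle))
    rw [h1, h2]
  have : Nonempty (Fin N) := ⟨⟨0, hN⟩⟩
  have : Nontrivial (Matrix (Fin N) (Fin N) ℂ) := by infer_instance
  have hint : IsIntegral ℂ S := Matrix.isIntegral S
  have hm0 : minpoly ℂ S ≠ 0 := minpoly.ne_zero hint
  have hmonic : (minpoly ℂ S).Monic := minpoly.monic hint
  set m := minpoly ℂ S with hmdef
  by_contra hne
  set d := m.natDegree with hddef
  have hd1 : 1 ≤ d := minpoly.natDegree_pos hint
  have hdvd : m ∣ Matrix.charpoly S := Matrix.minpoly_dvd_charpoly S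
  have hcdeg : (Matrix.charpoly S).natDegree = N := by
    rw [Matrix.charpoly_natDegree_eq_dim, Fintype.card_fin]
  have hdN : d < N := by
    rcases lt_or_eq_of_le (natDegree_le_natDegree (degree_le_of_dvd hdvd
      (Matrix.charpoly_monic S).ne_zero)) with h | h
    · omega
    · exfalso
      apply hne
      obtain ⟨k, hk⟩ := hdvd
      have hk0 : k ≠ 0 := by
        rintro rfl; rw [mul_zero] at hk; exact (Matrix.charpoly_monic S).ne_zero hk
      have hdegk : k.natDegree = 0 := by
        have := natDegree_mul hm0 hk0
        rw [← hk] at this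
        omega
      have hlc : k.leadingCoeff = 1 := by
        have h1 : (Matrix.charpoly S).leadingCoeff = m.leadingCoeff * k.leadingCoeff := by
          rw [hk, leadingCoeff_mul]
        rw [(Matrix.charpoly_monic S).leadingCoeff, hmonic.leadingCoeff, one_mul] at h1
        exact h1.symm
      have hk1 : k = 1 := by
        rw [Polynomial.eq_C_of_natDegree_eq_zero hdegk]
        rw [Polynomial.eq_C_of_natDegree_eq_zero hdegk] at hlc
        rw [leadingCoeff_C] at hlc
        rw [hlc, C_1]
      rw [hk, hk1, mul_one]
  obtain ⟨v, hv⟩ := ordS_exists S hN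
  set W : Submodule ℂ (Fin N → ℂ) :=
    Submodule.span ℂ (Set.range fun i : Fin d => (S ^ (i : ℕ)).mulVec v) with hWdef
  have haevalmod : ∀ q : ℂ[X], aeval S q = aeval S (q %ₘ m) := by
    intro q
    conv_lhs => rw [← modByMonic_add_div q m]
    rw [map_add, _root_.map_mul, minpoly.aeval, zero_mul, add_zero]
  have hmoddeg : ∀ q : ℂ[X], (q %ₘ m).natDegree < d := by
    intro q
    have := natDegree_modByMonic_lt q hmonic (by
      intro h1
      have : m.natDegree = 0 := by rw [h1, natDegree_one]
      omega)
    omega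
  have hmemW : ∀ q : ℂ[X], (aeval S q).mulVec v ∈ W := by
    intro q
    rw [haevalmod q]
    rw [aeval_eq_sum_range' (hmoddeg q)]
    rw [sum_mulVec']
    apply Submodule.sum_mem
    intro i hi
    rw [Matrix.smul_mulVec]
    apply Submodule.smul_mem
    apply Submodule.subset_span
    exact ⟨⟨i, Finset.mem_range.1 hi⟩, rfl⟩
  have hWrep : ∀ x ∈ W, ∃ r : ℂ[X], x = (aeval S r).mulVec v := by
    intro x hx
    induction hx using Submodule.span_induction with
    | mem y hy =>
      obtain ⟨i, rfl⟩ := hy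
      exact ⟨X ^ (i : ℕ), by rw [map_pow, aeval_X]⟩
    | zero => exact ⟨0, by rw [map_zero, Matrix.zero_mulVec]⟩
    | add y z _ _ hy hz =>
      obtain ⟨r1, rfl⟩ := hy
      obtain ⟨r2, rfl⟩ := hz
      exact ⟨r1 + r2, by rw [map_add, Matrix.add_mulVec]⟩
    | smul c y _ hy =>
      obtain ⟨r, rfl⟩ := hy
      refine ⟨C c * r, ?_⟩
      rw [_root_.map_mul, aeval_C, Algebra.algebraMap_eq_smul_one, Matrix.smul_mul,
        one_mul, Matrix.smul_mulVec]
  -- finrank of W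
  have hli : LinearIndependent ℂ (fun i : Fin d => (S ^ (i : ℕ)).mulVec v) :=
    orbit_li hv le_rfl
  have hfinW : Module.finrank ℂ W = d := by
    rw [hWdef, finrank_span_eq_card hli, Fintype.card_fin]
  -- nonvanishing vectors z lam
  have hz : ∀ lam ∈ m.roots, (aeval S (m /ₘ (X - C lam))).mulVec v ≠ 0 := by
    intro lam hlam
    have hfac1 : (X - C lam) * (m /ₘ (X - C lam)) = m :=
      mul_divByMonic_eq_iff_isRoot.2 (isRoot_of_mem_roots hlam)
    have hm1ne : m /ₘ (X - C lam) ≠ 0 := by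
      rintro h0; rw [h0, mul_zero] at hfac1; exact hm0 hfac1.symm
    intro h0
    have hdvd1 := (hv _).1 h0
    have h1 := natDegree_le_natDegree (degree_le_of_dvd hdvd1 hm1ne)
    rw [← hmdef] at h1
    have h2 : d = 1 + (m /ₘ (X - C lam)).natDegree := by
      conv_lhs => rw [hddef, ← hfac1]
      rw [natDegree_mul (X_sub_C_ne_zero lam) hm1ne, natDegree_X_sub_C]
    omega
  -- bad subspaces
  set B : ℂ → Submodule ℂ (Fin N → ℂ) := fun lam =>
    ⨅ q : ℂ[X], LinearMap.ker (dotR ((aeval S q).mulVec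
      ((aeval S (m /ₘ (X - C lam))).mulVec v))) with hBdef
  have hBmem : ∀ lam (w : Fin N → ℂ), w ∈ B lam ↔
      ∀ q : ℂ[X], w ⬝ᵥ ((aeval S q).mulVec ((aeval S (m /ₘ (X - C lam))).mulVec v)) = 0 := by
    intro lam w
    rw [hBdef]
    simp only [Submodule.mem_iInf, LinearMap.mem_ker, dotR_apply]
    exact forall_congr' fun q => by rw [dotProduct_comm]
  have hBne : ∀ lam ∈ m.roots.toFinset, B lam ≠ ⊤ := by
    intro lam hlam htop
    have hzlam := hz lam (Multiset.mem_toFinset.1 hlam)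
    obtain ⟨j, hj⟩ : ∃ j, ((aeval S (m /ₘ (X - C lam))).mulVec v) j ≠ 0 := by
      by_contra hcon; push_neg at hcon; exact hzlam (funext hcon)
    have hmem : (Pi.single j 1 : Fin N → ℂ) ∈ B lam := by
      rw [htop]; exact Submodule.mem_top
    have h1 := (hBmem lam _).1 hmem 1
    rw [_root_.map_one, Matrix.one_mulVec] at h1
    apply hj
    rw [← h1]
    simp [dotProduct, Pi.single_apply]
  -- choose w outside all bad subspaces
  set sB : Finset (Submodule ℂ (Fin N → ℂ)) := m.roots.toFinset.image B with hsBdef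
  have htopn : ⊤ ∉ sB := by
    intro hmem
    obtain ⟨lam, hlam, heq⟩ := Finset.mem_image.1 hmem
    exact hBne lam hlam heq
  obtain ⟨w, hw⟩ := (Set.ne_univ_iff_exists_notMem _).1
    (Subspace.biUnion_ne_univ_of_top_notMem htopn)
  have hwB : ∀ lam ∈ m.roots.toFinset, ∃ q : ℂ[X],
      w ⬝ᵥ ((aeval S q).mulVec ((aeval S (m /ₘ (X - C lam))).mulVec v)) ≠ 0 := by
    intro lam hlam
    by_contra hcon
    push_neg at hcon
    apply hw
    refine Set.mem_biUnion (Finset.mem_image_of_mem B hlam) ?_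
    exact (hBmem lam w).2 hcon
  -- the subspace U
  set Phi : (Fin N → ℂ) →ₗ[ℂ] (Fin d → ℂ) :=
    LinearMap.pi (fun j : Fin d => (dotR w).comp (Matrix.mulVecLin (S ^ (j : ℕ))))
    with hPhidef
  set U : Submodule ℂ (Fin N → ℂ) := LinearMap.ker Phi with hUdef
  have hUpow : ∀ x ∈ U, ∀ j : Fin d, w ⬝ᵥ ((S ^ (j : ℕ)).mulVec x) = 0 := by
    intro x hx j
    have := congrFun (LinearMap.mem_ker.1 hx) j
    simpa [hPhidef, LinearMap.pi_apply, Matrix.mulVecLin_apply] using this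
  have hUq : ∀ x ∈ U, ∀ q : ℂ[X], w ⬝ᵥ ((aeval S q).mulVec x) = 0 := by
    intro x hx q
    rw [haevalmod q, aeval_eq_sum_range' (hmoddeg q), sum_mulVec', dotProduct_sum']
    refine Finset.sum_eq_zero fun i hi => ?_
    rw [Matrix.smul_mulVec, dotProduct_smul]
    have := hUpow x hx ⟨i, Finset.mem_range.1 hi⟩
    rw [this, smul_zero]
  have hUmem : ∀ x, (∀ j : Fin d, w ⬝ᵥ ((S ^ (j : ℕ)).mulVec x) = 0) → x ∈ U := by
    intro x hx
    rw [hUdef, LinearMap.mem_ker]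
    ext j
    simpa [hPhidef, LinearMap.pi_apply, Matrix.mulVecLin_apply] using hx j
  -- W ∩ U = 0
  have hWU : W ⊓ U = ⊥ := by
    rw [Submodule.eq_bot_iff]
    rintro x ⟨hxW, hxU⟩
    by_contra hx0
    obtain ⟨r, rfl⟩ := hWrep x hxW
    have hmr : ¬ m ∣ r := fun hd => hx0 ((hv r).2 hd)
    set g := EuclideanDomain.gcd r m with hgdef
    have hgr : g ∣ r := EuclideanDomain.gcd_dvd_left _ _
    have hgm : g ∣ m := EuclideanDomain.gcd_dvd_right _ _
    obtain ⟨hh, hfac⟩ := hgm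
    have hh0 : hh ≠ 0 := by rintro rfl; rw [mul_zero] at hfac; exact hm0 hfac
    have hhu : ¬ IsUnit hh := by
      intro hu
      apply hmr
      refine dvd_trans ?_ hgr
      obtain ⟨iu, hiu⟩ := hu.exists_right_inv
      exact ⟨iu, by rw [hfac, mul_assoc, hiu, mul_one]⟩
    have hdegh : 0 < hh.degree := by
      by_contra hcon
      push_neg at hcon
      exact hhu (Polynomial.isUnit_iff_degree_eq_zero.2
        (le_antisymm hcon (zero_le_degree_iff.2 hh0)))
    obtain ⟨lam, hlam⟩ := Complex.exists_root hdegh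
    have hlamm : lam ∈ m.roots := by
      rw [mem_roots hm0]
      show eval lam m = 0
      rw [hfac, eval_mul, hlam.eq_zero, mul_zero]
    have hfac1 : (X - C lam) * (m /ₘ (X - C lam)) = m :=
      mul_divByMonic_eq_iff_isRoot.2 (isRoot_of_mem_roots hlamm)
    obtain ⟨h', hh'⟩ : (X - C lam) ∣ hh := dvd_iff_isRoot.2 hlam
    have hm1 : m /ₘ (X - C lam) = g * h' := by
      apply mul_left_cancel₀ (X_sub_C_ne_zero lam)
      rw [hfac1, hfac, hh']; ring
    obtain ⟨q, hq⟩ := hwB lam (Multiset.mem_toFinset.2 hlamm)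
    apply hq
    have hgv : (aeval S g).mulVec v
        = (aeval S (EuclideanDomain.gcdA r m)).mulVec ((aeval S r).mulVec v) := by
      conv_lhs => rw [hgdef, EuclideanDomain.gcd_eq_gcd_ab r m]
      rw [show r * EuclideanDomain.gcdA r m + m * EuclideanDomain.gcdB r m
          = EuclideanDomain.gcdA r m * r + EuclideanDomain.gcdB r m * m by ring]
      rw [map_add, Matrix.add_mulVec, mulVec_aeval_mul, mulVec_aeval_mul]
      rw [show (aeval S m).mulVec v = 0 from (hv m).2 dvd_rfl]
      rw [Matrix.mulVec_zero, add_zero]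
    rw [hm1]
    rw [show (aeval S (g * h')).mulVec v = (aeval S h').mulVec ((aeval S g).mulVec v) by
      rw [mul_comm, mulVec_aeval_mul]]
    rw [hgv, Matrix.mulVec_mulVec, Matrix.mulVec_mulVec, ← _root_.map_mul, ← _root_.map_mul]
    exact hUq _ hxU _
  -- dimension count
  have hfinU : N - d ≤ Module.finrank ℂ U := by
    have h1 := LinearMap.finrank_range_add_finrank_ker Phi
    have h2 : Module.finrank ℂ (LinearMap.range Phi) ≤ d := by
      have h3 := Submodule.finrank_le (LinearMap.range Phi)
      simpa using h3
    have h4 : Module.finrank ℂ (Fin N → ℂ) = N := by simp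
    rw [h4] at h1
    rw [hUdef]
    omega
  have hsup : W ⊔ U = ⊤ := by
    have h4 := Submodule.finrank_sup_add_finrank_inf_eq W U
    rw [hWU, finrank_bot, add_zero] at h4
    have h5 : Module.finrank ℂ ↥(W ⊔ U) ≤ N := by
      have := Submodule.finrank_le (W ⊔ U)
      simpa using this
    apply Submodule.eq_top_of_finrank_eq
    have h6 : Module.finrank ℂ (Fin N → ℂ) = N := by simp
    rw [h6]
    omega
  have hcompl : IsCompl W U := ⟨disjoint_iff.2 hWU, codisjoint_iff.2 hsup⟩
  -- the projection
  set prj : (Fin N → ℂ) →ₗ[ℂ] (Fin N → ℂ) :=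
    W.subtype.comp (W.linearProjOfIsCompl U hcompl) with hprjdef
  have hprjW : ∀ x ∈ W, prj x = x := by
    intro x hx
    show W.subtype (W.linearProjOfIsCompl U hcompl x) = x
    rw [show x = ((⟨x, hx⟩ : W) : Fin N → ℂ) from rfl,
      Submodule.linearProjOfIsCompl, Submodule.projectionOnto_apply_left hcompl]
    rfl
  have hprjU : ∀ x ∈ U, prj x = 0 := by
    intro x hx
    show W.subtype (W.linearProjOfIsCompl U hcompl x) = 0
    rw [show x = ((⟨x, hx⟩ : U) : Fin N → ℂ) from rfl,
      Submodule.linearProjOfIsCompl, Submodule.projectionOnto_apply_right hcompl]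
    rfl
  set H : Matrix (Fin N) (Fin N) ℂ := LinearMap.toMatrix' prj with hHdef
  have hHmul : ∀ x, H.mulVec x = prj x := by
    intro x
    rw [hHdef, ← Matrix.toLin'_apply, Matrix.toLin'_toMatrix']
  -- invariance
  have hSW : ∀ x ∈ W, S.mulVec x ∈ W := by
    intro x hx
    obtain ⟨r, rfl⟩ := hWrep x hx
    rw [show S.mulVec ((aeval S r).mulVec v) = (aeval S (X * r)).mulVec v by
      rw [mulVec_aeval_mul, aeval_X]]
    exact hmemW _
  have hSU : ∀ x ∈ U, S.mulVec x ∈ U := by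
    intro x hx
    apply hUmem
    intro j
    rw [Matrix.mulVec_mulVec, ← pow_succ]
    have := hUq x hx ((X : ℂ[X]) ^ ((j : ℕ) + 1))
    rwa [map_pow, aeval_X] at this
  -- H commutes with S
  have hcommute : H * S = S * H := by
    apply Matrix.toLin'.injective
    apply LinearMap.ext
    intro x
    rw [Matrix.toLin'_apply, Matrix.toLin'_apply]
    rw [← Matrix.mulVec_mulVec, ← Matrix.mulVec_mulVec, hHmul, hHmul]
    obtain ⟨a, haW, b, hbU, rfl⟩ := Submodule.mem_sup.1 (hsup ▸ Submodule.mem_top (x := x))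
    rw [Matrix.mulVec_add, map_add, map_add, hprjW a haW, hprjU b hbU,
      hprjW _ (hSW a haW), hprjU _ (hSU b hbU), add_zero, add_zero]
  obtain ⟨p, hp⟩ := hcom H hcommute
  have hvW : v ∈ W := by
    have := hmemW 1
    rwa [_root_.map_one, Matrix.one_mulVec] at this
  have hpv : (aeval S p).mulVec v = v := by
    rw [← hp, hHmul, hprjW v hvW]
  have hmp1 : m ∣ p - 1 := by
    apply (hv (p - 1)).1
    rw [map_sub, Matrix.sub_mulVec, hpv, _root_.map_one, Matrix.one_mulVec, sub_self]
  have hUne : U ≠ ⊥ := by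
    intro hbot
    rw [hbot] at hfinU
    rw [finrank_bot] at hfinU
    omega
  obtain ⟨u, huU, hu0⟩ := Submodule.ne_bot_iff U |>.1 hUne
  apply hu0
  have h1 : H.mulVec u = 0 := by rw [hHmul, hprjU u huU]
  rw [hp] at h1
  obtain ⟨c, hc⟩ := hmp1
  have hpdecomp : aeval S p = 1 + aeval S m * aeval S c := by
    have hp1 : p = 1 + m * c := by rw [← hc]; ring
    rw [hp1, map_add, _root_.map_one, _root_.map_mul]
  rw [hpdecomp, Matrix.add_mulVec, Matrix.one_mulVec, hmdef, minpoly.aeval, zero_mul,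
    Matrix.zero_mulVec, add_zero] at h1
  exact h1

end Stmt2Aux

theorem stmt2 (N : ℕ) (S : Matrix (Fin N) (Fin N) ℂ) :
    Matrix.charpoly S = minpoly ℂ S ↔
      ∀ H : Matrix (Fin N) (Fin N) ℂ, H * S = S * H →
        ∃ p : Polynomial ℂ, H = Polynomial.aeval S p := by
  constructor
  · intro h H hH
    exact Stmt2Aux.forward_dir h H hH
  · intro h
    exact Stmt2Aux.backward_dir h
end

section
/- There is no 3×3 complex matrix T such that: (i) the characteristic polynomial of T equals its minimal polynomial, (ii) S = ![![0,1,1],![0,0,0],![0,0,0]] is a polynomial in T, and (iii) T commutes with H = ![![0,1,0],![0,0,0],![0,0,0]]. -/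
open Polynomial Matrix

theorem stmt15 :
    let S : Matrix (Fin 3) (Fin 3) ℂ := ![![0,1,1],![0,0,0],![0,0,0]]
    let H : Matrix (Fin 3) (Fin 3) ℂ := ![![0,1,0],![0,0,0],![0,0,0]]
    ¬∃ T : Matrix (Fin 3) (Fin 3) ℂ,
      Matrix.charpoly T = minpoly ℂ T ∧
      (∃ r : Polynomial ℂ, S = Polynomial.aeval T r) ∧
      H * T = T * H := by
  intro S H
  rintro ⟨T, hcp, ⟨r, hr⟩, hcomm⟩
  have hScomm : S * T = T * S := by
    have := (Commute.all (X : Polynomial ℂ) r).map (Polynomial.aeval T)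
    simpa [hr, Commute, SemiconjBy] using this.symm
  have hH : ∀ i j, (H * T) i j = (T * H) i j := fun i j => by rw [hcomm]
  have hS : ∀ i j, (S * T) i j = (T * S) i j := fun i j => by rw [hScomm]
  simp only [S, H, Matrix.mul_apply, Fin.sum_univ_three] at hH hS
  have e1 := hH 0 0; have e2 := hH 0 1; have e3 := hH 0 2
  have f2 := hS 0 1; have f3 := hS 0 2; have f8 := hS 2 2
  erw [Matrix.mul_apply, Matrix.mul_apply] at e1 e2 e3 f2 f3 f8
  simp only [Fin.sum_univ_three] at e1 e2 e3 f2 f3 f8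
  simp only [Matrix.cons_val', Matrix.cons_val_zero, Matrix.cons_val_one, Matrix.head_cons,
    Matrix.head_fin_const, Matrix.cons_val_fin_one, Matrix.empty_val',
    Matrix.cons_val_two, Matrix.tail_cons, zero_mul, mul_zero, one_mul, mul_one,
    add_zero, zero_add] at e1 e2 e3 f2 f3 f8
  set a := T 0 0 with ha
  have g20 : T 2 0 = 0 := f8.symm
  have g21 : T 2 1 = 0 := by linear_combination f2 - e2
  have g22 : T 2 2 = a := by linear_combination f3 - e3
  have hN : (T - a • 1) ^ 2 = 0 := by
    ext i j
    fin_cases i <;> fin_cases j <;>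
      · simp only [pow_two, Matrix.mul_apply, Fin.sum_univ_three, Matrix.sub_apply,
          Matrix.smul_apply, Matrix.one_apply, Matrix.zero_apply]
        norm_num [e1, e2, e3, g20, g21, g22]
        ring_nf
        simp [e1, e2, e3, g20, g21, g22, ← ha] <;> ring
  have hmdvd : minpoly ℂ T ∣ (X - C a) ^ 2 := by
    apply minpoly.dvd
    have : Polynomial.aeval T ((X - C a) ^ 2) = (T - a • 1) ^ 2 := by
      simp [Algebra.algebraMap_eq_smul_one]
    rw [this, hN]
  have hdeg : (minpoly ℂ T).natDegree ≤ 2 := by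
    have h2 : ((X - C a) ^ 2 : Polynomial ℂ).natDegree = 2 := by
      simp [Polynomial.natDegree_pow]
    calc (minpoly ℂ T).natDegree ≤ ((X - C a) ^ 2 : Polynomial ℂ).natDegree :=
          Polynomial.natDegree_le_of_dvd hmdvd (pow_ne_zero _ (X_sub_C_ne_zero a))
      _ = 2 := h2
  have h3 : (Matrix.charpoly T).natDegree = 3 := by
    simp [Matrix.charpoly_natDegree_eq_dim T]
  rw [hcp] at h3
  omega
end
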